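/- Let p be a prime, let q = p^r, let m ≥ 1, let a, b ∈ 𝔽_q with a ≠ b, and let β ∈ 𝔽_{q^m}. Then the number of triples (x, y, z) with x ∈ 𝔽_{q^m}^*, y, z ∈ 𝔽_{q^m}, satisfying y^q − y = x + a(β + x^{−1}) and z^q − z = x + b(β + x^{−1}) equals q^m − q − Σ_{v ∈ 𝔽_q^*} e(vβ) + Σ_{v ∈ 𝔽_q^*} e(vβ) · Σ_{u ∈ 𝔽_q^*} S_{−1}^{(m)}(u, v). (This is the affine point count of the fibre product L_{m,−1,β} of the two Kloosterman-type Artin–Schreier curves, whose number of rational places is N_{m,−1}(β) = q^m + 1 + Σ_{v ∈ 𝔽_q^*} e(vβ) Σ_{u ∈ 𝔽_q^*} S_{−1}^{(m)}(u,v).) -/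

import Mathlib

open Finset

/-- The canonical additive character of a finite field `E` of characteristic `p`:
`e(x) = exp(2πi · Tr_{E/𝔽_p}(x) / p)`. -/
noncomputable def addChar (p : ℕ) (E : Type) [Field E] [Fintype E] [Algebra (ZMod p) E]
    (x : E) : ℂ :=
  Complex.exp (2 * Real.pi * Complex.I * ((Algebra.trace (ZMod p) E x).val : ℂ) / p)

/-- The Kloosterman-type sum `S₋₁^{(m)}(u,v) = Σ_{z ∈ 𝔽_{q^m}^*} e(uz + vz⁻¹)` for `u, v ∈ 𝔽_q`. -/
noncomputable def Sinv (p : ℕ) (F E : Type) [Field F] [Fintype F] [Field E] [Fintype E]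
    [DecidableEq E] [Algebra (ZMod p) E] [Algebra F E] (u v : F) : ℂ :=
  ∑ z ∈ Finset.univ.filter (fun z : E => z ≠ 0),
    addChar p E (algebraMap F E u * z + algebraMap F E v * z⁻¹)


set_option linter.unusedSectionVars false

section Aux
variable {p : ℕ} [Fact p.Prime] [NeZero p]
variable {E : Type} [Field E] [Fintype E] [DecidableEq E] [Algebra (ZMod p) E]

noncomputable def ψE (p : ℕ) [NeZero p] (E : Type) [Field E] [Fintype E]
    [Algebra (ZMod p) E] : AddChar E ℂ :=
  (ZMod.stdAddChar (N := p)).compAddMonoidHom (Algebra.trace (ZMod p) E).toAddMonoidHom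

lemma ψE_apply (x : E) : ψE p E x = addChar p E x := by
  simp only [ψE, AddChar.compAddMonoidHom_apply, LinearMap.toAddMonoidHom_coe,
    ZMod.stdAddChar_apply, ZMod.toCircle_apply, addChar]


lemma charP_E : CharP E p :=
  charP_of_injective_algebraMap (algebraMap (ZMod p) E).injective p

lemma exists_trace_ne_zero : ∃ x : E, Algebra.trace (ZMod p) E x ≠ 0 := by
  haveI := charP_E (p := p) (E := E)
  have h : ringChar E = p := ringChar.eq E p
  subst h
  obtain ⟨x, hx⟩ := FiniteField.trace_to_zmod_nondegenerate E (one_ne_zero (α := E))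
  exact ⟨x, by simpa using hx⟩

lemma ψE_ne_one : ψE p E ≠ 1 := by
  obtain ⟨x, hx⟩ := exists_trace_ne_zero (p := p) (E := E)
  rw [AddChar.ne_one_iff]
  refine ⟨x, fun h => hx ?_⟩
  have : ZMod.stdAddChar (Algebra.trace (ZMod p) E x) = ZMod.stdAddChar (0 : ZMod p) := by
    simpa [ψE] using h
  exact ZMod.injective_stdAddChar this

lemma sum_ψE_mul (c : E) (hc : c ≠ 0) : ∑ x : E, ψE p E (c * x) = 0 := by
  have hne : (ψE p E).mulShift c ≠ 1 := by
    obtain ⟨x, hx⟩ := AddChar.ne_one_iff.mp (ψE_ne_one (p := p) (E := E))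
    rw [AddChar.ne_one_iff]
    exact ⟨c⁻¹ * x, by rwa [AddChar.mulShift_apply, mul_inv_cancel_left₀ hc]⟩
  simpa [AddChar.mulShift_apply] using AddChar.sum_eq_zero_of_ne_one hne

variable {p : ℕ} [Fact p.Prime]
variable {E : Type} [Field E] [Fintype E] [DecidableEq E] [Algebra (ZMod p) E]

lemma trace_frob (x : E) :
    Algebra.trace (ZMod p) E (x ^ p) = Algebra.trace (ZMod p) E x := by
  haveI : CharP E p := charP_of_injective_algebraMap (algebraMap (ZMod p) E).injective p
  haveI : ExpChar E p := ExpChar.prime (Fact.out)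
  let σ : E ≃ₐ[ZMod p] E := AlgEquiv.ofRingEquiv (f := frobeniusEquiv E p)
    (fun c => by
      have : ((frobeniusEquiv E p : E →+* E).comp (algebraMap (ZMod p) E)) =
          algebraMap (ZMod p) E := RingHom.ext_zmod _ _
      exact DFunLike.congr_fun this c)
  have h : σ x = x ^ p := by
    simp [σ, AlgEquiv.ofRingEquiv, frobeniusEquiv_apply, frobenius_def]
  rw [← h, Algebra.trace_eq_of_algEquiv]

lemma trace_frob_pow (s : ℕ) (x : E) :
    Algebra.trace (ZMod p) E (x ^ p ^ s) = Algebra.trace (ZMod p) E x := by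
  induction s with
  | zero => simp
  | succ s ih =>
      rw [pow_succ, pow_mul, trace_frob, ih]


variable {F : Type} [Field F] [Fintype F] [Algebra F E]

lemma count_AS {r m : ℕ} (hr : 0 < r) (hm : 0 < m)
    (hF : Fintype.card F = p ^ r) (hE : Fintype.card E = (p ^ r) ^ m) (w : E) :
    (((univ.filter (fun y : E => y ^ (p ^ r) - y = w)).card : ℂ)) =
      ∑ t : F, ψE p E (algebraMap F E t * w) := by
  classical
  haveI : CharP E p := charP_E
  set q := p ^ r with hq
  have hp : p.Prime := Fact.out
  have hq1 : 1 < q := Nat.one_lt_pow hr.ne' hp.one_lt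
  have hq0 : 0 < q := by omega
  set n := Fintype.card E with hn
  have hnq : n = q ^ (m - 1) * q := by
    rw [hE, ← pow_succ, Nat.sub_add_cancel hm]
  set φ : E →+ E := AddMonoidHom.mk' (fun y => y ^ q - y)
    (fun x y => by show (x + y) ^ q - (x + y) = (x ^ q - x) + (y ^ q - y); rw [hq, add_pow_char_pow]; ring) with hφ
  have hφa : ∀ y : E, φ y = y ^ q - y := fun _ => rfl
  set K := univ.filter (fun y : E => φ y = 0) with hK
  set img := univ.image φ with himg
  have fib_card : ∀ w' ∈ img, (univ.filter (fun y : E => φ y = w')).card = K.card := by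
    intro w' hw'
    obtain ⟨y₀, -, hy₀⟩ := Finset.mem_image.mp hw'
    apply Finset.card_bij' (fun y _ => y - y₀) (fun k _ => k + y₀)
    · intro y hy
      simp only [hK, mem_filter, mem_univ, true_and] at *
      rw [map_sub, hy, hy₀, sub_self]
    · intro k hk
      simp only [hK, mem_filter, mem_univ, true_and] at *
      rw [map_add, hk, hy₀, zero_add]
    · intro y _; ring
    · intro k _; ring
  have fib_zero : ∀ w' : E, w' ∉ img → (univ.filter (fun y : E => φ y = w')) = ∅ := by
    intro w' hw'
    rw [Finset.filter_eq_empty_iff]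
    exact fun {y} _ h => hw' (Finset.mem_image.mpr ⟨y, mem_univ y, h⟩)
  have h_total : ∑ w' : E, (univ.filter (fun y : E => φ y = w')).card = n := by
    rw [← Finset.card_eq_sum_card_fiberwise (fun x (_ : x ∈ univ) => mem_univ (φ x)),
      Finset.card_univ]
  have h_img_mul : img.card * K.card = n := by
    have h1 : ∑ w' ∈ img, (univ.filter (fun y : E => φ y = w')).card
        = ∑ w' : E, (univ.filter (fun y : E => φ y = w')).card := by
      apply Finset.sum_subset (Finset.subset_univ _)
      intro x _ hx
      rw [fib_zero x hx, Finset.card_empty]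
    rw [← h_total, ← h1, Finset.sum_congr rfl (fun w' hw' => fib_card w' hw'),
      Finset.sum_const, smul_eq_mul]
  have hK_le : K.card ≤ q := by
    have hPne : (Polynomial.X ^ q - Polynomial.X : Polynomial E) ≠ 0 := by
      intro h0
      have h2 : ((Polynomial.X : Polynomial E) ^ q - Polynomial.X).coeff q = 1 := by
        simp only [Polynomial.coeff_sub, Polynomial.coeff_X_pow, if_pos rfl, Polynomial.coeff_X]
        rw [if_neg (show ¬ (1:ℕ) = q by omega)]
        simp
      rw [h0, Polynomial.coeff_zero] at h2
      exact one_ne_zero h2.symm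
    have hsub : K ⊆ (Polynomial.X ^ q - Polynomial.X : Polynomial E).roots.toFinset := by
      intro y hy
      simp only [hK, mem_filter, mem_univ, true_and, hφa, sub_eq_zero] at hy
      rw [Multiset.mem_toFinset, Polynomial.mem_roots hPne]
      simp [Polynomial.IsRoot, sub_eq_zero, hy]
    calc K.card ≤ _ := Finset.card_le_card hsub
      _ ≤ _ := Multiset.toFinset_card_le _
      _ ≤ (Polynomial.X ^ q - Polynomial.X : Polynomial E).natDegree := Polynomial.card_roots' _
      _ ≤ q := by
          refine le_trans (Polynomial.natDegree_sub_le _ _) ?_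
          simp only [Polynomial.natDegree_X_pow, Polynomial.natDegree_X]
          omega
  set W := univ.filter (fun w' : E => ∀ t : F, ψE p E (algebraMap F E t * w') = 1) with hW
  have h_inner : ∀ w' : E, (∑ t : F, ψE p E (algebraMap F E t * w'))
      = if w' ∈ W then (q : ℂ) else 0 := by
    intro w'
    by_cases hw : ∀ t : F, ψE p E (algebraMap F E t * w') = 1
    · rw [if_pos (by simpa [hW] using hw)]
      rw [Finset.sum_congr rfl (fun t _ => hw t), Finset.sum_const, Finset.card_univ, hF,
        nsmul_eq_mul, mul_one]
    · rw [if_neg (by simpa [hW] using hw)]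
      push_neg at hw
      obtain ⟨t₀, ht₀⟩ := hw
      set χ : AddChar F ℂ := (ψE p E).compAddMonoidHom
        ((AddMonoidHom.mulRight w').comp (algebraMap F E).toAddMonoidHom) with hχ
      have hχa : ∀ t : F, χ t = ψE p E (algebraMap F E t * w') := fun t => rfl
      have hχne : χ ≠ 1 := AddChar.ne_one_iff.mpr ⟨t₀, by rw [hχa]; exact ht₀⟩
      calc ∑ t : F, ψE p E (algebraMap F E t * w') = ∑ t : F, χ t := by
            exact Finset.sum_congr rfl fun t _ => (hχa t).symm
        _ = 0 := AddChar.sum_eq_zero_of_ne_one hχne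
  have h_qW : (q * W.card : ℕ) = n := by
    have hcalc : ∑ w' : E, ∑ t : F, ψE p E (algebraMap F E t * w') = (n : ℂ) := by
      rw [Finset.sum_comm, Finset.sum_eq_single (0 : F)]
      · simp [AddChar.map_zero_eq_one, hn]
      · intro t _ ht
        have hA : algebraMap F E t ≠ 0 := fun h =>
          ht ((map_eq_zero_iff _ (algebraMap F E).injective).mp h)
        exact sum_ψE_mul _ hA
      · exact fun h => absurd (mem_univ 0) h
    have hcalc2 : ∑ w' : E, ∑ t : F, ψE p E (algebraMap F E t * w')
        = ((q * W.card : ℕ) : ℂ) := by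
      rw [Finset.sum_congr rfl (fun w' _ => h_inner w'), Finset.sum_ite_mem,
        Finset.univ_inter, Finset.sum_const, nsmul_eq_mul]
      push_cast
      ring
    exact_mod_cast hcalc2.symm.trans hcalc
  have h_W_card : W.card = q ^ (m - 1) := by
    have : q * W.card = q * q ^ (m - 1) := by rw [h_qW, hnq]; ring
    exact Nat.eq_of_mul_eq_mul_left hq0 this
  have h_sub : img ⊆ W := by
    intro w' hw'
    obtain ⟨y, -, hy⟩ := Finset.mem_image.mp hw'
    simp only [hW, mem_filter, mem_univ, true_and]
    intro t
    have htq : t ^ q = t := by rw [← hF]; exact FiniteField.pow_card t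
    have key : algebraMap F E t * w' = (algebraMap F E t * y) ^ q - algebraMap F E t * y := by
      rw [← hy, hφa, mul_sub, mul_pow, ← map_pow, htq]
    set u := algebraMap F E t * y with hu
    have hψq : ψE p E (u ^ q) = ψE p E u := by
      simp only [ψE, AddChar.compAddMonoidHom_apply, LinearMap.toAddMonoidHom_coe]
      rw [hq, trace_frob_pow]
    have hmul : ψE p E (u ^ q - u) * ψE p E u = ψE p E u := by
      rw [← AddChar.map_add_eq_mul]
      rw [show u ^ q - u + u = u ^ q by ring, hψq]
    have h1 : ψE p E u * ψE p E (-u) = 1 := by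
      rw [← AddChar.map_add_eq_mul]
      simp
    have hne : ψE p E u ≠ 0 := left_ne_zero_of_mul_eq_one h1
    rw [key]
    exact mul_right_cancel₀ hne (by rw [hmul, one_mul])
  have h_img_ge : q ^ (m - 1) ≤ img.card := by
    have h2 : q ^ (m - 1) * q ≤ img.card * q := by
      calc q ^ (m - 1) * q = n := hnq.symm
        _ = img.card * K.card := h_img_mul.symm
        _ ≤ img.card * q := Nat.mul_le_mul_left _ hK_le
    exact Nat.le_of_mul_le_mul_right h2 hq0
  have h_img_eq : img = W :=
    Finset.eq_of_subset_of_card_le h_sub (by rw [h_W_card]; exact h_img_ge)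
  have hK_eq : K.card = q := by
    have h4 : img.card = q ^ (m - 1) := by rw [h_img_eq, h_W_card]
    have h5 : q ^ (m - 1) * K.card = q ^ (m - 1) * q := by
      rw [← h4, h_img_mul, hnq, h4]
    exact Nat.eq_of_mul_eq_mul_left (pow_pos hq0 _) h5
  have hgoal : ∀ w' : E, ((univ.filter (fun y : E => φ y = w')).card : ℂ)
      = if w' ∈ W then (q : ℂ) else 0 := by
    intro w'
    by_cases hw : w' ∈ W
    · rw [if_pos hw, fib_card w' (h_img_eq.symm ▸ hw), hK_eq]
    · rw [if_neg hw, fib_zero w' (fun h => hw (h_img_eq ▸ h)), Finset.card_empty]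
      norm_num
  rw [h_inner w, ← hgoal w]
  norm_num [hφa]

omit [Fact p.Prime] in
lemma sum_split {G : Type} [Field G] [Fintype G] [DecidableEq G] (f : G → ℂ) :
    ∑ s : G, f s = f 0 + ∑ s ∈ univ.filter (fun s : G => s ≠ 0), f s := by
  rw [Finset.filter_ne']
  exact (Finset.add_sum_erase univ f (mem_univ 0)).symm

lemma sum_ne_zero_ψ (c : E) (hc : c ≠ 0) :
    ∑ x ∈ univ.filter (fun x : E => x ≠ 0), ψE p E (c * x) = -1 := by
  have h := sum_ψE_mul (p := p) (E := E) c hc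
  have h2 := sum_split (G := E) (fun x : E => ψE p E (c * x))
  rw [h, mul_zero, AddChar.map_zero_eq_one] at h2
  linear_combination -h2

omit [Fact p.Prime] in
lemma sum_inv_ne_zero (f : E → ℂ) :
    ∑ x ∈ univ.filter (fun x : E => x ≠ 0), f x⁻¹
      = ∑ x ∈ univ.filter (fun x : E => x ≠ 0), f x := by
  refine Finset.sum_bij' (fun x _ => x⁻¹) (fun x _ => x⁻¹) ?_ ?_ ?_ ?_ ?_
  · intro x hx
    simp only [mem_filter, mem_univ, true_and] at hx ⊢
    exact inv_ne_zero hx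
  · intro x hx
    simp only [mem_filter, mem_univ, true_and] at hx ⊢
    exact inv_ne_zero hx
  · intro x _; exact inv_inv x
  · intro x _; exact inv_inv x
  · intro x _; rfl

end Aux


set_option maxHeartbeats 1000000 in
/-- Let `p` be a prime, `q = p^r`, `m ≥ 1`, `a ≠ b` in `𝔽_q`, and `β ∈ 𝔽_{q^m}`.
The number of triples `(x,y,z)` with `x ∈ 𝔽_{q^m}^*`, `y, z ∈ 𝔽_{q^m}`,
`y^q - y = x + a(β + x⁻¹)` and `z^q - z = x + b(β + x⁻¹)` equals
`q^m - q - Σ_{v ∈ 𝔽_q^*} e(vβ) + Σ_{v ∈ 𝔽_q^*} e(vβ) Σ_{u ∈ 𝔽_q^*} S₋₁^{(m)}(u,v)`. -/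
theorem affine_count_fibre_product_kloosterman
    (p r m : ℕ) (hp : p.Prime) (hr : 0 < r) (hm : 0 < m)
    (F E : Type) [Field F] [Fintype F] [DecidableEq F] [Field E] [Fintype E] [DecidableEq E]
    [Algebra (ZMod p) E] [Algebra F E]
    (hF : Fintype.card F = p ^ r) (hE : Fintype.card E = (p ^ r) ^ m)
    (a b : F) (hab : a ≠ b) (β : E) :
    (Nat.card {t : E × E × E // t.1 ≠ 0 ∧
        t.2.1 ^ (p ^ r) - t.2.1 = t.1 + algebraMap F E a * (β + t.1⁻¹) ∧
        t.2.2 ^ (p ^ r) - t.2.2 = t.1 + algebraMap F E b * (β + t.1⁻¹)} : ℂ) =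
      ((p : ℂ) ^ r) ^ m - (p : ℂ) ^ r -
        (∑ v ∈ Finset.univ.filter (fun v : F => v ≠ 0), addChar p E (algebraMap F E v * β)) +
        ∑ v ∈ Finset.univ.filter (fun v : F => v ≠ 0),
          addChar p E (algebraMap F E v * β) *
            ∑ u ∈ Finset.univ.filter (fun u : F => u ≠ 0), Sinv p F E u v := by
  classical
  haveI : Fact p.Prime := ⟨hp⟩
  haveI : NeZero p := ⟨hp.ne_zero⟩
  set A : F →+* E := (algebraMap F E : F →+* E) with hA
  set ψ : AddChar E ℂ := ψE p E with hψ
  set X : Finset E := univ.filter (fun x : E => x ≠ 0) with hX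
  have hq0 : (0:ℕ) < p ^ r := pow_pos hp.pos r
  have hq1 : (1:ℕ) ≤ Fintype.card F := Fintype.card_pos
  have hcE1 : (1:ℕ) ≤ Fintype.card E := Fintype.card_pos
  -- the two right-hand sides
  set fa : E → E := fun x => x + A a * (β + x⁻¹) with hfa
  set fb : E → E := fun x => x + A b * (β + x⁻¹) with hfb
  set P : E × E × E → Prop := fun t => t.1 ≠ 0 ∧
      t.2.1 ^ (p ^ r) - t.2.1 = fa t.1 ∧ t.2.2 ^ (p ^ r) - t.2.2 = fb t.1 with hP
  -- Step 0 : Nat.card = Finset.card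
  have h0 : (Nat.card {t : E × E × E // P t} : ℂ) = ((univ.filter P).card : ℂ) := by
    rw [Nat.card_eq_fintype_card, Fintype.card_subtype]
  rw [show {t : E × E × E // t.1 ≠ 0 ∧
        t.2.1 ^ (p ^ r) - t.2.1 = t.1 + algebraMap F E a * (β + t.1⁻¹) ∧
        t.2.2 ^ (p ^ r) - t.2.2 = t.1 + algebraMap F E b * (β + t.1⁻¹)} = {t : E × E × E // P t}
    from rfl, h0]
  -- Step 1 : express the count via the two Artin–Schreier fibre counts
  have step1 : ((univ.filter P).card : ℂ)
      = ∑ x ∈ X,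
          ((univ.filter (fun y : E => y ^ (p ^ r) - y = fa x)).card : ℂ) *
          ((univ.filter (fun z : E => z ^ (p ^ r) - z = fb x)).card : ℂ) := by
    rw [Finset.card_filter]
    push_cast
    rw [Fintype.sum_prod_type]
    have hx_inner : ∀ x : E, (∑ yz : E × E, if P (x, yz) then (1:ℂ) else 0)
        = if x ≠ 0 then
            ((univ.filter (fun y : E => y ^ (p ^ r) - y = fa x)).card : ℂ) *
            ((univ.filter (fun z : E => z ^ (p ^ r) - z = fb x)).card : ℂ) else 0 := by
      intro x
      by_cases hx : x = 0
      · simp [hx, hP]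
      · rw [if_pos hx]
        rw [Fintype.sum_prod_type]
        rw [Finset.card_filter, Finset.card_filter]
        push_cast
        rw [Finset.sum_mul_sum]
        apply Finset.sum_congr rfl
        intro y _
        apply Finset.sum_congr rfl
        intro z _
        simp only [hP, hx, ne_eq, not_false_iff, true_and]
        by_cases h1 : y ^ p ^ r - y = fa x <;> by_cases h2 : z ^ p ^ r - z = fb x <;>
          simp [h1, h2]
    rw [Finset.sum_congr rfl (fun x _ => hx_inner x), Finset.sum_ite, Finset.sum_const_zero,
      add_zero, hX]
  rw [step1]
  -- Step 2 : character expansion of each fibre count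
  have step2 : ∀ x ∈ X,
      ((univ.filter (fun y : E => y ^ (p ^ r) - y = fa x)).card : ℂ) *
      ((univ.filter (fun z : E => z ^ (p ^ r) - z = fb x)).card : ℂ)
      = ∑ u : F, ∑ v : F, ψ (A (u + v) * x + A (u * a + v * b) * β + A (u * a + v * b) * x⁻¹) := by
    intro x hx
    have hx0 : x ≠ 0 := by simpa [hX] using hx
    rw [count_AS hr hm hF hE (fa x), count_AS hr hm hF hE (fb x), Finset.sum_mul_sum]
    apply Finset.sum_congr rfl
    intro u _
    apply Finset.sum_congr rfl
    intro v _
    rw [← AddChar.map_add_eq_mul]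
    congr 1
    simp only [hfa, hfb, map_add, map_mul]
    ring
  rw [Finset.sum_congr rfl step2]
  -- Step 3 : swap the sums
  rw [Finset.sum_comm]
  have step3 : ∀ u : F, ∑ x ∈ X, ∑ v : F,
        ψ (A (u + v) * x + A (u * a + v * b) * β + A (u * a + v * b) * x⁻¹)
      = ∑ v : F, ∑ x ∈ X,
        ψ (A (u + v) * x + A (u * a + v * b) * β + A (u * a + v * b) * x⁻¹) :=
    fun u => by rw [Finset.sum_comm]
  rw [Finset.sum_congr rfl (fun u _ => step3 u)]
  -- Step 4 : substitution (u,v) ↦ (s,t) = (u+v, ua+vb)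
  set G : F → F → ℂ := fun s t => ∑ x ∈ X, ψ (A s * x + A t * β + A t * x⁻¹) with hG
  have hba : b - a ≠ 0 := sub_ne_zero.mpr (Ne.symm hab)
  have step4 : ∑ u : F, ∑ v : F, G (u + v) (u * a + v * b) = ∑ s : F, ∑ t : F, G s t := by
    let e : F × F ≃ F × F :=
      { toFun := fun uv => (uv.1 + uv.2, uv.1 * a + uv.2 * b)
        invFun := fun st => ((st.1 * b - st.2) / (b - a), (st.2 - st.1 * a) / (b - a))
        left_inv := fun uv => by
          obtain ⟨u, v⟩ := uv
          simp only [Prod.mk.injEq]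
          constructor <;> (field_simp; ring)
        right_inv := fun st => by
          obtain ⟨s, t⟩ := st
          simp only [Prod.mk.injEq]
          constructor <;> (field_simp; ring) }
    calc ∑ u : F, ∑ v : F, G (u + v) (u * a + v * b)
        = ∑ uv : F × F, G (uv.1 + uv.2) (uv.1 * a + uv.2 * b) :=
          (Fintype.sum_prod_type' (f := fun u v : F => G (u + v) (u * a + v * b))).symm
      _ = ∑ uv : F × F, (fun st : F × F => G st.1 st.2) (e uv) :=
          Finset.sum_congr rfl (fun uv _ => rfl)
      _ = ∑ st : F × F, G st.1 st.2 := e.sum_comp (fun st : F × F => G st.1 st.2)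
      _ = ∑ s : F, ∑ t : F, G s t := Fintype.sum_prod_type' (f := fun s t : F => G s t)
  rw [step4]
  -- Step 5 : evaluate the four pieces
  have hG00 : G 0 0 = (Fintype.card E : ℂ) - 1 := by
    simp only [hG, map_zero, zero_mul, add_zero, zero_add, AddChar.map_zero_eq_one]
    rw [Finset.sum_const, hX, Finset.filter_ne', Finset.card_erase_of_mem (mem_univ 0),
      Finset.card_univ, nsmul_eq_mul, mul_one]
    push_cast [hcE1]
    ring
  have hGs0 : ∀ s : F, s ≠ 0 → G s 0 = -1 := by
    intro s hs
    have hAs : A s ≠ 0 := fun h => hs ((map_eq_zero_iff _ (algebraMap F E).injective).mp h)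
    simp only [hG, map_zero, zero_mul, add_zero]
    exact sum_ne_zero_ψ (A s) hAs
  have hG0t : ∀ t : F, t ≠ 0 → G 0 t = ψ (A t * β) * (-1) := by
    intro t ht
    have hAt : A t ≠ 0 := fun h => ht ((map_eq_zero_iff _ (algebraMap F E).injective).mp h)
    simp only [hG, map_zero, zero_mul, zero_add]
    have : ∀ x : E, ψ (A t * β + A t * x⁻¹) = ψ (A t * β) * ψ (A t * x⁻¹) := fun x =>
      AddChar.map_add_eq_mul _ _ _
    rw [Finset.sum_congr rfl (fun x _ => this x), ← Finset.mul_sum]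
    congr 1
    rw [hX, sum_inv_ne_zero (fun x : E => ψ (A t * x))]
    exact sum_ne_zero_ψ (A t) hAt
  have hGst : ∀ s t : F, s ≠ 0 → t ≠ 0 → G s t = ψ (A t * β) * Sinv p F E s t := by
    intro s t hs ht
    simp only [hG]
    have : ∀ x : E, ψ (A s * x + A t * β + A t * x⁻¹)
        = ψ (A t * β) * ψ (A s * x + A t * x⁻¹) := by
      intro x
      rw [← AddChar.map_add_eq_mul]
      congr 1
      ring
    rw [Finset.sum_congr rfl (fun x _ => this x), ← Finset.mul_sum]
    congr 1
    rw [Sinv, hX]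
    exact Finset.sum_congr rfl (fun x _ => by rw [hψ, ψE_apply])
  -- split both sums at 0
  rw [sum_split (G := F) (fun s => ∑ t : F, G s t)]
  rw [sum_split (G := F) (fun t => G 0 t)]
  rw [Finset.sum_congr rfl (fun s (hs : s ∈ univ.filter (fun s : F => s ≠ 0)) =>
    sum_split (G := F) (fun t => G s t))]
  rw [Finset.sum_add_distrib]
  have hs0 : ∑ s ∈ univ.filter (fun s : F => s ≠ 0), G s 0 = -(((p:ℂ) ^ r) - 1) := by
    rw [Finset.sum_congr rfl (fun s hs => hGs0 s (by simpa using hs)), Finset.sum_const,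
      Finset.filter_ne', Finset.card_erase_of_mem (mem_univ 0), Finset.card_univ, hF,
      nsmul_eq_mul]
    push_cast [Nat.one_le_iff_ne_zero.mpr (by positivity : (p:ℕ)^r ≠ 0)]
    ring
  have ht0 : ∑ t ∈ univ.filter (fun t : F => t ≠ 0), G 0 t
      = -∑ t ∈ univ.filter (fun t : F => t ≠ 0), addChar p E (algebraMap F E t * β) := by
    rw [Finset.sum_congr rfl (fun t ht => hG0t t (by simpa using ht))]
    rw [← Finset.sum_neg_distrib]
    apply Finset.sum_congr rfl
    intro t _
    rw [hψ, ψE_apply]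
    ring
  have hst : ∑ s ∈ univ.filter (fun s : F => s ≠ 0),
        ∑ t ∈ univ.filter (fun t : F => t ≠ 0), G s t
      = ∑ v ∈ univ.filter (fun v : F => v ≠ 0),
          addChar p E (algebraMap F E v * β) *
            ∑ u ∈ univ.filter (fun u : F => u ≠ 0), Sinv p F E u v := by
    rw [Finset.sum_comm]
    apply Finset.sum_congr rfl
    intro t ht
    have ht0' : t ≠ 0 := by simpa using ht
    rw [Finset.mul_sum]
    apply Finset.sum_congr rfl
    intro s hs
    have hs0' : s ≠ 0 := by simpa using hs
    rw [hGst s t hs0' ht0', hψ, ψE_apply]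
  rw [hG00, hs0, ht0, hst]
  have hcE : (Fintype.card E : ℂ) = ((p : ℂ) ^ r) ^ m := by rw [hE]; push_cast; ring
  rw [hcE]
  ring
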